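/- Let M ≥ 1, β > 0, and s ∈ {-1,1}^M a random vector with i.i.d. entries of mean m₀ ∈ [0,1]. Define g(p) = (M/2)p² − (1/β)·E_s[ log(2cosh(β p Σ_μ s_μ)) ] for p ∈ ℝ. Then g is an even function of p and is convex as a function of p² (i.e. p² ↦ g(√(p²)) is convex on [0,∞)). Moreover, if β(1 + (M−1)m₀²) > 1 then the minimum of g is attained away from 0. -/

import Mathlib

open Finset Real Set


lemma aux_cosh_quad (x : ℝ) : 1 + x ^ 2 / 2 ≤ Real.cosh x := by
  have key : ∀ y : ℝ, 0 ≤ y → 1 + y ^ 2 / 2 ≤ Real.cosh y := by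
    intro y hy
    have hmono : MonotoneOn (fun t => Real.cosh t - 1 - t ^ 2 / 2) (Ici (0:ℝ)) := by
      apply monotoneOn_of_deriv_nonneg (convex_Ici 0)
      · exact ((Real.continuous_cosh.sub continuous_const).sub
          (continuous_pow 2 |>.div_const 2)).continuousOn
      · intro t ht
        exact (((Real.differentiable_cosh t).sub (differentiableAt_const 1)).sub
          (((differentiable_pow 2) t).div_const 2)).differentiableWithinAt
      · intro t ht
        rw [interior_Ici, Set.mem_Ioi] at ht
        have h1 : HasDerivAt (fun t : ℝ => Real.cosh t - 1 - t ^ 2 / 2)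
            (Real.sinh t - t) t := by
          have := ((Real.hasDerivAt_cosh t).sub_const 1).sub
            ((hasDerivAt_pow 2 t).div_const 2)
          refine this.congr_deriv ?_
          norm_num
        rw [h1.deriv]
        have := Real.self_le_sinh_iff.mpr ht.le
        linarith
    have := hmono (self_mem_Ici) hy hy
    simp only [Real.cosh_zero] at this
    nlinarith
  rcases le_total 0 x with h | h
  · exact key x h
  · have := key (-x) (by linarith)
    simpa using this

lemma aux_log_two_cosh_ge (x : ℝ) :
    Real.log 2 + x ^ 2 / 2 - x ^ 4 / 4 ≤ Real.log (2 * Real.cosh x) := by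
  have hc : (0:ℝ) < Real.cosh x := Real.cosh_pos x
  rw [Real.log_mul (by norm_num) hc.ne']
  have h1 : Real.log (1 + x ^ 2 / 2) ≤ Real.log (Real.cosh x) :=
    Real.log_le_log (by positivity) (aux_cosh_quad x)
  -- log(1+t) ≥ t/(1+t) ≥ t - t²
  set t : ℝ := x ^ 2 / 2 with ht
  have ht0 : 0 ≤ t := by positivity
  have h2 : t / (1 + t) ≤ Real.log (1 + t) := by
    have hpos : (0:ℝ) < 1 + t := by linarith
    have := Real.log_le_sub_one_of_pos (x := (1+t)⁻¹) (by positivity)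
    rw [Real.log_inv] at this
    have : -(1+t)⁻¹ + 1 ≤ Real.log (1+t) := by linarith
    calc t / (1+t) = -(1+t)⁻¹ + 1 := by field_simp; ring
    _ ≤ _ := this
  have h3 : t - t ^ 2 ≤ t / (1 + t) := by
    have hpos : (0:ℝ) < 1 + t := by linarith
    rw [le_div_iff₀ hpos]
    nlinarith
  have : t - t ^ 2 ≤ Real.log (Real.cosh x) := by linarith
  have ht2 : t ^ 2 ≤ x ^ 4 / 4 := by rw [ht]; ring_nf; nlinarith [sq_nonneg x]
  linarith

lemma aux_log_two_cosh_le (x : ℝ) : Real.log (2 * Real.cosh x) ≤ Real.log 2 + |x| := by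
  have hc : (0:ℝ) < Real.cosh x := Real.cosh_pos x
  rw [Real.log_mul (by norm_num) hc.ne']
  have h1 : Real.cosh x ≤ Real.exp |x| := by
    rw [Real.cosh_eq]
    have e1 : Real.exp x ≤ Real.exp |x| := Real.exp_le_exp.mpr (le_abs_self x)
    have e2 : Real.exp (-x) ≤ Real.exp |x| := Real.exp_le_exp.mpr (neg_le_abs x)
    nlinarith [Real.exp_pos x, Real.exp_pos (-x)]
  have := Real.log_le_log hc h1
  rw [Real.log_exp] at this
  linarith

lemma aux_hasDerivAt_tanh (x : ℝ) :
    HasDerivAt Real.tanh (1 / Real.cosh x ^ 2) x := by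
  have h : HasDerivAt (fun y => Real.sinh y / Real.cosh y)
      ((Real.cosh x * Real.cosh x - Real.sinh x * Real.sinh x) / Real.cosh x ^ 2) x :=
    (Real.hasDerivAt_sinh x).div (Real.hasDerivAt_cosh x) (Real.cosh_pos x).ne'
  have e : (Real.cosh x * Real.cosh x - Real.sinh x * Real.sinh x) = 1 := by
    have := Real.cosh_sq_sub_sinh_sq x; nlinarith
  rw [e] at h
  convert h using 1
  funext y
  exact Real.tanh_eq_sinh_div_cosh y

lemma aux_continuous_tanh : Continuous Real.tanh := by
  have : Real.tanh = fun y => Real.sinh y / Real.cosh y := by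
    funext y; exact Real.tanh_eq_sinh_div_cosh y
  rw [this]
  exact Real.continuous_sinh.div Real.continuous_cosh fun y => (Real.cosh_pos y).ne'

lemma aux_tanh_concave : ConcaveOn ℝ (Ici (0:ℝ)) Real.tanh := by
  apply AntitoneOn.concaveOn_of_deriv (convex_Ici 0) aux_continuous_tanh.continuousOn
  · intro x hx
    exact (aux_hasDerivAt_tanh x).differentiableAt.differentiableWithinAt
  · intro x hx y hy hxy
    rw [interior_Ici] at hx hy
    rw [(aux_hasDerivAt_tanh x).deriv, (aux_hasDerivAt_tanh y).deriv]
    have hcx : (1:ℝ) ≤ Real.cosh x := Real.one_le_cosh x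
    have hcy : Real.cosh x ≤ Real.cosh y := by
      rw [Real.cosh_le_cosh]
      rw [abs_of_nonneg (le_of_lt hx), abs_of_nonneg (le_of_lt (lt_of_lt_of_le hx hxy))]
      exact hxy
    apply div_le_div_of_nonneg_left one_pos.le (by positivity) ?_ |>.trans_eq rfl
    · nlinarith
  -- grr; check signature

lemma aux_tanh_slope {x y : ℝ} (hx : 0 < x) (hxy : x ≤ y) :
    Real.tanh y * x ≤ Real.tanh x * y := by
  have hy : 0 < y := lt_of_lt_of_le hx hxy
  have hcomb := aux_tanh_concave.2 (Set.self_mem_Ici (a := (0:ℝ)))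
    (Set.mem_Ici.mpr hy.le)
    (show (0:ℝ) ≤ 1 - x/y by rw [sub_nonneg]; exact div_le_one_of_le₀ hxy hy.le)
    (show (0:ℝ) ≤ x/y by positivity)
    (show (1 - x/y) + x/y = 1 by ring)
  simp only [smul_eq_mul, mul_zero, Real.tanh_zero, zero_add] at hcomb
  rw [show x / y * y = x by field_simp] at hcomb
  have : x / y * Real.tanh y ≤ Real.tanh x := by linarith
  calc Real.tanh y * x = (x / y * Real.tanh y) * y := by field_simp
  _ ≤ Real.tanh x * y := by nlinarith

/-- key: `u ↦ log (2 cosh (c √u))` is concave on `[0,∞)`. -/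
lemma aux_concave_logcosh_sqrt (c : ℝ) :
    ConcaveOn ℝ (Ici (0:ℝ)) (fun u => Real.log (2 * Real.cosh (c * Real.sqrt u))) := by
  have hpos : ∀ u : ℝ, (0:ℝ) < 2 * Real.cosh (c * Real.sqrt u) := fun u => by
    have := Real.cosh_pos (c * Real.sqrt u); linarith
  have hderiv : ∀ u : ℝ, 0 < u → HasDerivAt (fun u => Real.log (2 * Real.cosh (c * Real.sqrt u)))
      (c * Real.tanh (c * Real.sqrt u) / (2 * Real.sqrt u)) u := by
    intro u hu
    have hsu : 0 < Real.sqrt u := Real.sqrt_pos.mpr hu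
    have h1 : HasDerivAt (fun u : ℝ => c * Real.sqrt u) (c * (1 / (2 * Real.sqrt u))) u :=
      (Real.hasDerivAt_sqrt hu.ne').const_mul c
    have h2 : HasDerivAt (fun u : ℝ => Real.cosh (c * Real.sqrt u))
        (Real.sinh (c * Real.sqrt u) * (c * (1 / (2 * Real.sqrt u)))) u :=
      (Real.hasDerivAt_cosh _).comp u h1
    have h3 := (h2.const_mul 2).log (hpos u).ne'
    convert h3 using 1
    rw [Real.tanh_eq_sinh_div_cosh]
    have hc := (Real.cosh_pos (c * Real.sqrt u)).ne'
    field_simp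
  apply AntitoneOn.concaveOn_of_deriv (convex_Ici 0)
  · exact ((continuous_const.mul (Real.continuous_cosh.comp
      (continuous_const.mul Real.continuous_sqrt))).log
      (fun u => (hpos u).ne')).continuousOn
  · intro u hu
    rw [interior_Ici] at hu
    exact (hderiv u hu).differentiableAt.differentiableWithinAt
  · intro u hu v hv huv
    rw [interior_Ici] at hu hv
    rw [(hderiv u hu).deriv, (hderiv v hv).deriv]
    -- reduce to |c| case
    have key : ∀ d : ℝ, 0 ≤ d →
        d * Real.tanh (d * Real.sqrt v) / (2 * Real.sqrt v)
          ≤ d * Real.tanh (d * Real.sqrt u) / (2 * Real.sqrt u) := by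
      intro d hd
      rcases eq_or_lt_of_le hd with h0 | hd
      · simp [← h0]
      have hsu : 0 < Real.sqrt u := Real.sqrt_pos.mpr hu
      have hsv : 0 < Real.sqrt v := Real.sqrt_pos.mpr hv
      have hsuv : Real.sqrt u ≤ Real.sqrt v := Real.sqrt_le_sqrt huv
      have ha : 0 < d * Real.sqrt u := by positivity
      have hab : d * Real.sqrt u ≤ d * Real.sqrt v := by nlinarith
      have := aux_tanh_slope ha hab
      rw [div_le_div_iff₀ (by positivity) (by positivity)]
      nlinarith
    rcases le_total 0 c with hc | hc
    · exact key c hc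
    · have hneg : ∀ x : ℝ, c * Real.tanh (c * x) = (-c) * Real.tanh ((-c) * x) := by
        intro x
        rw [show (-c) * x = -(c * x) by ring, Real.tanh_neg]
        ring
      rw [hneg (Real.sqrt u), hneg (Real.sqrt v)]
      exact key (-c) (by linarith)

noncomputable def sg (b : Bool) : ℝ := if b then 1 else -1

noncomputable def wt (m₀ : ℝ) (b : Bool) : ℝ := (1 + sg b * m₀) / 2

lemma aux_wt_nonneg {m₀ : ℝ} (h0 : 0 ≤ m₀) (h1 : m₀ ≤ 1) (b : Bool) : 0 ≤ wt m₀ b := by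
  cases b <;> simp [wt, sg] <;> linarith

lemma aux_sum_wt (m₀ : ℝ) : ∑ b, wt m₀ b = 1 := by
  simp [wt, sg]; ring

lemma aux_sum_wt_sg (m₀ : ℝ) : ∑ b, wt m₀ b * sg b = m₀ := by
  simp [wt, sg]; ring

lemma aux_sg_sq (b : Bool) : sg b * sg b = 1 := by cases b <;> simp [sg]

lemma aux_sum_W (M : ℕ) (m₀ : ℝ) :
    ∑ s : Fin M → Bool, ∏ ν, wt m₀ (s ν) = 1 := by
  rw [← Fintype.prod_sum (fun (_ : Fin M) (b : Bool) => wt m₀ b)]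
  simp only [aux_sum_wt, Finset.prod_const_one]

lemma aux_E2 (M : ℕ) (m₀ : ℝ) (μ ν : Fin M) :
    ∑ s : Fin M → Bool, (∏ ρ, wt m₀ (s ρ)) * (sg (s μ) * sg (s ν))
      = if μ = ν then 1 else m₀ ^ 2 := by
  have hrw : ∀ s : Fin M → Bool,
      (∏ ρ, wt m₀ (s ρ)) * (sg (s μ) * sg (s ν))
        = ∏ ρ, (wt m₀ (s ρ) * ((if ρ = μ then sg (s ρ) else 1) * (if ρ = ν then sg (s ρ) else 1))) := by
    intro s
    have h1 : ∏ ρ, (if ρ = μ then sg (s ρ) else 1) = sg (s μ) := by simp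
    have h2 : ∏ ρ, (if ρ = ν then sg (s ρ) else 1) = sg (s ν) := by simp
    rw [Finset.prod_mul_distrib, Finset.prod_mul_distrib, h1, h2]
  simp_rw [hrw]
  rw [← Fintype.prod_sum (fun (ρ : Fin M) (b : Bool) =>
    wt m₀ b * ((if ρ = μ then sg b else 1) * (if ρ = ν then sg b else 1)))]
  by_cases h : μ = ν
  · subst h
    have hv : ∀ ρ : Fin M, ∑ b, wt m₀ b * ((if ρ = μ then sg b else 1) * (if ρ = μ then sg b else 1)) = 1 := by
      intro ρ
      by_cases hρ : ρ = μ
      · simp only [if_pos hρ]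
        simp [wt, sg]; ring
      · simp only [if_neg hρ, mul_one, aux_sum_wt]
    simp only [hv, Finset.prod_const_one, if_pos rfl]
    simp
  · have hval : ∀ ρ : Fin M, ∑ b, wt m₀ b * ((if ρ = μ then sg b else 1) * (if ρ = ν then sg b else 1))
        = (if ρ = μ then m₀ else 1) * (if ρ = ν then m₀ else 1) := by
      intro ρ
      by_cases hμ : ρ = μ
      · have hν : ρ ≠ ν := by rw [hμ]; exact h
        simp only [if_pos hμ, if_neg hν, mul_one]
        exact aux_sum_wt_sg m₀
      · by_cases hν : ρ = ν
        · simp only [if_neg hμ, if_pos hν, one_mul]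
          exact aux_sum_wt_sg m₀
        · simp only [if_neg hμ, if_neg hν, mul_one, aux_sum_wt]
    simp_rw [hval]
    rw [Finset.prod_mul_distrib]
    rw [Finset.prod_ite_eq' univ μ (fun _ => m₀), Finset.prod_ite_eq' univ ν (fun _ => m₀)]
    simp [if_neg h, sq]

lemma aux_sum_W_S2 (M : ℕ) (m₀ : ℝ) :
    ∑ s : Fin M → Bool, (∏ ν, wt m₀ (s ν)) * (∑ μ, sg (s μ)) ^ 2
      = M + M * (M - 1) * m₀ ^ 2 := by
  have hsq : ∀ s : Fin M → Bool, (∑ μ, sg (s μ)) ^ 2 = ∑ μ, ∑ ν, sg (s μ) * sg (s ν) := by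
    intro s
    rw [sq, Finset.sum_mul_sum]
  simp_rw [hsq, Finset.mul_sum]
  rw [Finset.sum_comm]
  have hinner : ∀ μ : Fin M, ∑ s : Fin M → Bool, ∑ ν, (∏ ρ, wt m₀ (s ρ)) * (sg (s μ) * sg (s ν))
      = 1 + ((M:ℝ) - 1) * m₀ ^ 2 := by
    intro μ
    rw [Finset.sum_comm]
    calc ∑ ν, ∑ s : Fin M → Bool, (∏ ρ, wt m₀ (s ρ)) * (sg (s μ) * sg (s ν))
        = ∑ ν, if μ = ν then (1:ℝ) else m₀ ^ 2 :=
          Finset.sum_congr rfl fun ν _ => aux_E2 M m₀ μ ν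
      _ = ∑ ν : Fin M, ((if μ = ν then (1:ℝ) - m₀ ^ 2 else 0) + m₀ ^ 2) := by
          refine Finset.sum_congr rfl fun ν _ => ?_
          by_cases hh : μ = ν <;> simp [hh]
      _ = 1 + ((M:ℝ) - 1) * m₀ ^ 2 := by
          rw [Finset.sum_add_distrib, Finset.sum_ite_eq univ μ (fun _ => (1:ℝ) - m₀ ^ 2)]
          simp [Finset.card_univ]
          ring
  rw [Finset.sum_congr rfl fun μ _ => hinner μ]
  simp [Finset.card_univ]
  ring

lemma aux_S_abs_le (M : ℕ) (s : Fin M → Bool) : |∑ μ, sg (s μ)| ≤ M := by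
  calc |∑ μ, sg (s μ)| ≤ ∑ μ : Fin M, |sg (s μ)| := Finset.abs_sum_le_sum_abs _ _
  _ = M := by
    have : ∀ b : Bool, |sg b| = 1 := fun b => by cases b <;> simp [sg]
    simp [this, Finset.card_univ]

set_option maxHeartbeats 2000000 in
/-- The free energy along the homogeneous direction,
`g(p) = (M/2)p² − (1/β)·E_s[log(2cosh(βp Σ_μ s_μ))]`, is even, convex as a
function of `p²`, and if `β(1+(M−1)m₀²) > 1` its minimum is attained away from 0. -/
theorem free_energy_homogeneous_line
    (M : ℕ) (hM : 1 ≤ M) (β m₀ : ℝ) (hβ : 0 < β)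
    (hm₀0 : 0 ≤ m₀) (hm₀1 : m₀ ≤ 1)
    (g : ℝ → ℝ)
    (hg : ∀ p : ℝ, g p = (M / 2) * p ^ 2 - (1 / β) *
      ∑ s : Fin M → Bool,
        (∏ ν : Fin M, ((1 + (if s ν then (1:ℝ) else -1) * m₀) / 2)) *
          Real.log (2 * Real.cosh (β * p * ∑ μ : Fin M, (if s μ then (1:ℝ) else -1)))) :
    (∀ p : ℝ, g (-p) = g p)
    ∧ ConvexOn ℝ (Set.Ici (0:ℝ)) (fun u => g (Real.sqrt u))
    ∧ (1 < β * (1 + ((M:ℝ) - 1) * m₀ ^ 2) →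
        ∃ p : ℝ, p ≠ 0 ∧ ∀ q : ℝ, g p ≤ g q) := by
  -- abbreviations
  set S : (Fin M → Bool) → ℝ := fun s => ∑ μ, sg (s μ) with hS
  set W : (Fin M → Bool) → ℝ := fun s => ∏ ν, wt m₀ (s ν) with hW
  have hg2 : ∀ p : ℝ, g p = (M / 2) * p ^ 2 - (1 / β) *
      ∑ s : Fin M → Bool, W s * Real.log (2 * Real.cosh (β * p * S s)) := by
    intro p; rw [hg p]; rfl
  have hWnn : ∀ s : Fin M → Bool, 0 ≤ W s :=
    fun s => Finset.prod_nonneg fun ν _ => aux_wt_nonneg hm₀0 hm₀1 (s ν)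
  have hWsum : ∑ s : Fin M → Bool, W s = 1 := aux_sum_W M m₀
  have hS2 : ∑ s : Fin M → Bool, W s * S s ^ 2 = M + M * ((M:ℝ) - 1) * m₀ ^ 2 :=
    aux_sum_W_S2 M m₀
  have hSabs : ∀ s : Fin M → Bool, |S s| ≤ M := fun s => aux_S_abs_le M s
  clear_value S W
  have hβinv : (0:ℝ) ≤ 1 / β := by positivity
  -- Part 1: evenness
  have part1 : ∀ p : ℝ, g (-p) = g p := by
    intro p
    rw [hg2, hg2]
    have h1 : ∀ s : Fin M → Bool,
        Real.cosh (β * -p * S s) = Real.cosh (β * p * S s) := by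
      intro s
      rw [show β * -p * S s = -(β * p * S s) by ring, Real.cosh_neg]
    simp_rw [h1, neg_sq]
  -- Part 2: convexity in p²
  have part2 : ConvexOn ℝ (Set.Ici (0:ℝ)) (fun u => g (Real.sqrt u)) := by
    set L : (Fin M → Bool) → ℝ → ℝ :=
      fun s u => Real.log (2 * Real.cosh ((β * S s) * Real.sqrt u)) with hL
    have hgL : ∀ u : ℝ, 0 ≤ u →
        g (Real.sqrt u) = (M / 2) * u - (1 / β) * ∑ s : Fin M → Bool, W s * L s u := by
      intro u hu
      rw [hg2, Real.sq_sqrt hu]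
      have : ∀ s : Fin M → Bool, β * Real.sqrt u * S s = (β * S s) * Real.sqrt u :=
        fun s => by ring
      simp_rw [hL, this]
    refine ⟨convex_Ici 0, ?_⟩
    intro x hx y hy a b ha hb hab
    rw [Set.mem_Ici] at hx hy
    have hz : (0:ℝ) ≤ a * x + b * y := by positivity
    simp only [smul_eq_mul]
    rw [hgL x hx, hgL y hy, hgL _ hz]
    have hterm : ∀ s : Fin M → Bool, a * L s x + b * L s y ≤ L s (a * x + b * y) := by
      intro s
      have := (aux_concave_logcosh_sqrt (β * S s)).2 (Set.mem_Ici.mpr hx)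
        (Set.mem_Ici.mpr hy) ha hb hab
      simpa using this
    have hsum : a * (∑ s : Fin M → Bool, W s * L s x) + b * (∑ s : Fin M → Bool, W s * L s y)
        ≤ ∑ s : Fin M → Bool, W s * L s (a * x + b * y) := by
      have h1 : ∑ s : Fin M → Bool, W s * (a * L s x + b * L s y)
          ≤ ∑ s : Fin M → Bool, W s * L s (a * x + b * y) :=
        Finset.sum_le_sum fun s _ => mul_le_mul_of_nonneg_left (hterm s) (hWnn s)
      calc a * (∑ s : Fin M → Bool, W s * L s x) + b * (∑ s : Fin M → Bool, W s * L s y)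
          = ∑ s : Fin M → Bool, W s * (a * L s x + b * L s y) := by
            rw [Finset.mul_sum, Finset.mul_sum, ← Finset.sum_add_distrib]
            exact Finset.sum_congr rfl fun s _ => by ring
        _ ≤ _ := h1
    have hP := mul_le_mul_of_nonneg_left hsum hβinv
    nlinarith [hP]
  refine ⟨part1, part2, ?_⟩
  -- Part 3
  intro hcond
  set E : ℝ := (M:ℝ) + M * ((M:ℝ) - 1) * m₀ ^ 2 with hE
  have hM1 : (1:ℝ) ≤ (M:ℝ) := by exact_mod_cast hM
  have hβE : (M:ℝ) < β * E := by
    have h1 : (M:ℝ) * 1 < (M:ℝ) * (β * (1 + ((M:ℝ) - 1) * m₀ ^ 2)) := by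
      apply mul_lt_mul_of_pos_left hcond; linarith
    have h2 : β * E = (M:ℝ) * (β * (1 + ((M:ℝ) - 1) * m₀ ^ 2)) := by rw [hE]; ring
    linarith
  have hg0 : g 0 = -(1 / β) * Real.log 2 := by
    rw [hg2 0]
    simp only [mul_zero, zero_mul, Real.cosh_zero, mul_one, ne_eq, OfNat.ofNat_ne_zero,
      not_false_eq_true, zero_pow]
    rw [← Finset.sum_mul, hWsum]
    ring
  -- lower bound near 0
  have hlow : ∀ p : ℝ, g p ≤ g 0 + (((M:ℝ) - β * E) / 2) * p ^ 2 + (β ^ 3 * (M:ℝ) ^ 4 / 4) * p ^ 4 := by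
    intro p
    have hterm : ∀ s : Fin M → Bool,
        Real.log 2 + β ^ 2 * p ^ 2 * S s ^ 2 / 2 - β ^ 4 * p ^ 4 * (M:ℝ) ^ 4 / 4
          ≤ Real.log (2 * Real.cosh (β * p * S s)) := by
      intro s
      have h1 := aux_log_two_cosh_ge (β * p * S s)
      have hS2le : S s ^ 2 ≤ (M:ℝ) ^ 2 := by
        have := hSabs s
        nlinarith [abs_nonneg (S s), sq_abs (S s)]
      have hS4le : S s ^ 4 ≤ (M:ℝ) ^ 4 := by nlinarith [sq_nonneg (S s), sq_nonneg ((M:ℝ))]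
      have e2 : (β * p * S s) ^ 2 = β ^ 2 * p ^ 2 * S s ^ 2 := by ring
      have e4 : (β * p * S s) ^ 4 = β ^ 4 * p ^ 4 * S s ^ 4 := by ring
      rw [e2, e4] at h1
      nlinarith [sq_nonneg (β ^ 2 * p ^ 2)]
    have hsum : Real.log 2 + (β ^ 2 * p ^ 2 / 2) * E - β ^ 4 * p ^ 4 * (M:ℝ) ^ 4 / 4
        ≤ ∑ s : Fin M → Bool, W s * Real.log (2 * Real.cosh (β * p * S s)) := by
      have h1 : ∑ s : Fin M → Bool,
          W s * (Real.log 2 + β ^ 2 * p ^ 2 * S s ^ 2 / 2 - β ^ 4 * p ^ 4 * (M:ℝ) ^ 4 / 4)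
            ≤ ∑ s : Fin M → Bool, W s * Real.log (2 * Real.cosh (β * p * S s)) :=
        Finset.sum_le_sum fun s _ => mul_le_mul_of_nonneg_left (hterm s) (hWnn s)
      have h2 : ∑ s : Fin M → Bool,
          W s * (Real.log 2 + β ^ 2 * p ^ 2 * S s ^ 2 / 2 - β ^ 4 * p ^ 4 * (M:ℝ) ^ 4 / 4)
          = Real.log 2 + (β ^ 2 * p ^ 2 / 2) * E - β ^ 4 * p ^ 4 * (M:ℝ) ^ 4 / 4 := by
        have expand : ∀ s : Fin M → Bool,
            W s * (Real.log 2 + β ^ 2 * p ^ 2 * S s ^ 2 / 2 - β ^ 4 * p ^ 4 * (M:ℝ) ^ 4 / 4)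
            = W s * (Real.log 2 - β ^ 4 * p ^ 4 * (M:ℝ) ^ 4 / 4)
              + (β ^ 2 * p ^ 2 / 2) * (W s * S s ^ 2) := fun s => by ring
        rw [Finset.sum_congr rfl fun s _ => expand s, Finset.sum_add_distrib,
          ← Finset.sum_mul, hWsum, ← Finset.mul_sum, hS2]
        rw [hE]; ring
      linarith
    have := mul_le_mul_of_nonneg_left hsum hβinv
    rw [hg2 p, hg0]
    have hβne : β ≠ 0 := hβ.ne'
    have e : (1/β) * (Real.log 2 + (β ^ 2 * p ^ 2 / 2) * E - β ^ 4 * p ^ 4 * (M:ℝ) ^ 4 / 4)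
        = (1/β) * Real.log 2 + (β * p ^ 2 / 2) * E - β ^ 3 * p ^ 4 * (M:ℝ) ^ 4 / 4 := by
      field_simp
    rw [e] at this
    linarith
  clear_value E
  -- choose a small nonzero point beating 0
  set δ : ℝ := min ((β * E - (M:ℝ)) / (β ^ 3 * (M:ℝ) ^ 4)) 1 with hδ
  have hMpos : (0:ℝ) < (M:ℝ) := by linarith
  have hδpos : 0 < δ := by
    apply lt_min _ one_pos
    apply div_pos (by linarith) (by positivity)
  set p₀ : ℝ := Real.sqrt δ with hp₀
  have hp₀pos : 0 < p₀ := Real.sqrt_pos.mpr hδpos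
  have hp₀sq : p₀ ^ 2 = δ := Real.sq_sqrt hδpos.le
  clear_value p₀
  clear_value δ
  have hgp₀ : g p₀ < g 0 := by
    have h1 := hlow p₀
    have hδle : δ ≤ (β * E - (M:ℝ)) / (β ^ 3 * (M:ℝ) ^ 4) := by
      rw [hδ]; exact min_le_left _ _
    have hden : (0:ℝ) < β ^ 3 * (M:ℝ) ^ 4 := by positivity
    have hδle' : δ * (β ^ 3 * (M:ℝ) ^ 4) ≤ β * E - (M:ℝ) := by
      rw [← le_div_iff₀ hden]; exact hδle
    have e4 : p₀ ^ 4 = δ ^ 2 := by rw [show p₀ ^ 4 = (p₀ ^ 2) ^ 2 by ring, hp₀sq]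
    rw [hp₀sq, e4] at h1
    have k1 : δ * (β ^ 3 * (M:ℝ) ^ 4) * δ ≤ (β * E - (M:ℝ)) * δ :=
      mul_le_mul_of_nonneg_right hδle' hδpos.le
    have k2 : 0 < (β * E - (M:ℝ)) * δ := mul_pos (by linarith) hδpos
    linarith only [h1, k1, k2]
  -- coercivity
  have hup : ∀ q : ℝ, (M:ℝ) / 2 * q ^ 2 - (M:ℝ) * |q| - (1 / β) * Real.log 2 ≤ g q := by
    intro q
    have hterm : ∀ s : Fin M → Bool,
        Real.log (2 * Real.cosh (β * q * S s)) ≤ Real.log 2 + β * |q| * (M:ℝ) := by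
      intro s
      have h1 := aux_log_two_cosh_le (β * q * S s)
      have h2 : |β * q * S s| ≤ β * |q| * (M:ℝ) := by
        rw [abs_mul, abs_mul, abs_of_pos hβ]
        exact mul_le_mul_of_nonneg_left (hSabs s) (by positivity)
      linarith
    have hsum : ∑ s : Fin M → Bool, W s * Real.log (2 * Real.cosh (β * q * S s))
        ≤ Real.log 2 + β * |q| * (M:ℝ) := by
      calc ∑ s : Fin M → Bool, W s * Real.log (2 * Real.cosh (β * q * S s))
          ≤ ∑ s : Fin M → Bool, W s * (Real.log 2 + β * |q| * (M:ℝ)) :=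
            Finset.sum_le_sum fun s _ => mul_le_mul_of_nonneg_left (hterm s) (hWnn s)
        _ = Real.log 2 + β * |q| * (M:ℝ) := by rw [← Finset.sum_mul, hWsum, one_mul]
    have hmul := mul_le_mul_of_nonneg_left hsum hβinv
    rw [hg2 q]
    have hβne : β ≠ 0 := hβ.ne'
    have e : (1/β) * (Real.log 2 + β * |q| * (M:ℝ)) = (1/β) * Real.log 2 + (M:ℝ) * |q| := by
      field_simp
    rw [e] at hmul
    calc (M:ℝ) / 2 * q ^ 2 - (M:ℝ) * |q| - (1 / β) * Real.log 2
        = (M:ℝ) / 2 * q ^ 2 - ((1 / β) * Real.log 2 + (M:ℝ) * |q|) := by ring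
      _ ≤ (M:ℝ) / 2 * q ^ 2
          - (1 / β) * ∑ s : Fin M → Bool, W s * Real.log (2 * Real.cosh (β * q * S s)) :=
        sub_le_sub_left hmul _
      _ = (M:ℝ) / 2 * q ^ 2
          - 1 / β * ∑ s : Fin M → Bool, W s * Real.log (2 * Real.cosh (β * q * S s)) := by
        rw [one_div]
  -- continuity of g
  have hgc : Continuous g := by
    have hfun : g = fun p => (M / 2 : ℝ) * p ^ 2 - (1 / β) *
        ∑ s : Fin M → Bool, W s * Real.log (2 * Real.cosh (β * p * S s)) := funext hg2
    rw [hfun]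
    apply Continuous.sub
    · exact continuous_const.mul (continuous_pow 2)
    · apply continuous_const.mul
      apply continuous_finset_sum
      intro s _
      apply continuous_const.mul
      apply Continuous.log
      · exact continuous_const.mul (Real.continuous_cosh.comp
          ((continuous_const.mul continuous_id).mul continuous_const))
      · intro x
        have := Real.cosh_pos (β * x * S s)
        positivity
  -- compact minimization
  set C : ℝ := |g p₀| + (1 / β) * |Real.log 2| with hC
  have hCnn : 0 ≤ C := by positivity
  set R : ℝ := p₀ + 2 * C + 4 with hR
  have hp₀R : p₀ ≤ R := by rw [hR]; linarith
  have hRpos : (0:ℝ) < R := by rw [hR]; linarith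
  clear_value C R
  have hfar : ∀ q : ℝ, R ≤ |q| → g p₀ ≤ g q := by
    intro q hq
    have h1 := hup q
    have ht : (4:ℝ) ≤ |q| := by linarith
    have key : C ≤ (M:ℝ) / 2 * q ^ 2 - (M:ℝ) * |q| - (1 / β) * Real.log 2 := by
      have hq2 : q ^ 2 = |q| ^ 2 := (sq_abs q).symm
      have hlog : (1 / β) * Real.log 2 ≤ (1 / β) * |Real.log 2| :=
        mul_le_mul_of_nonneg_left (le_abs_self _) hβinv
      have hquad : 2 * C + 2 ≤ (M:ℝ) / 2 * |q| ^ 2 - (M:ℝ) * |q| := by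
        have h2 : (M:ℝ) / 2 * |q| ^ 2 - (M:ℝ) * |q| = (M:ℝ) * (|q| * (|q| - 2)) / 2 := by ring
        rw [h2]
        have h3 : (2 * C + 2) * 2 ≤ |q| * (|q| - 2) := by nlinarith [hq, ht, hCnn, hR, hp₀pos]
        have hXnn : (0:ℝ) ≤ |q| * (|q| - 2) := mul_nonneg (by linarith) (by linarith)
        have h4 : 1 * (|q| * (|q| - 2)) ≤ (M:ℝ) * (|q| * (|q| - 2)) :=
          mul_le_mul_of_nonneg_right hM1 hXnn
        linarith
      rw [hq2]
      have : C ≤ 2 * C + 2 - (1 / β) * |Real.log 2| := by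
        rw [hC]; nlinarith [abs_nonneg (g p₀), abs_nonneg (Real.log 2)]
      linarith
    have : g p₀ ≤ C := by rw [hC]; nlinarith [le_abs_self (g p₀), abs_nonneg (Real.log 2)]
    linarith
  obtain ⟨pstar, hpK, hmin⟩ := isCompact_Icc.exists_isMinOn
    (Set.nonempty_Icc.mpr (by linarith : -R ≤ R)) hgc.continuousOn
  have hminOn : ∀ q ∈ Set.Icc (-R) R, g pstar ≤ g q := fun q hq => hmin hq
  have hp₀K : p₀ ∈ Set.Icc (-R) R := ⟨by linarith, hp₀R⟩
  have hstar_lt : g pstar < g 0 := lt_of_le_of_lt (hminOn p₀ hp₀K) hgp₀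
  refine ⟨pstar, ?_, ?_⟩
  · intro h0
    rw [h0] at hstar_lt
    exact lt_irrefl _ hstar_lt
  · intro q
    by_cases hqK : q ∈ Set.Icc (-R) R
    · exact hminOn q hqK
    · have hq : R ≤ |q| := by
        rw [Set.mem_Icc, not_and_or, not_le, not_le] at hqK
        rcases hqK with h | h
        · rw [abs_of_neg (by linarith)]; linarith
        · rw [abs_of_pos (by linarith)]; linarith
      exact le_trans (hminOn p₀ hp₀K) (hfar q hq)
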